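/- Let a, A, b, B be nonzero complex numbers, let K > 0, and let s ∈ {+1, -1}. Then there exist C > 0 and m₀ ∈ ℕ such that for all m ≥ m₀ and all z ∈ ℂ with |z| ≤ K/m, the quantity Φ_m(z) = ∑_{k=1}^{m} bA / ((4(m+1-k) + sz)(4k + sz)) + ∑_{k=2}^{m} aB / ((4(k-1) + sz)(4(m+1-k) + sz)) satisfies |Φ_m(z) - [(Ab+aB)·log m/(8m) + g·(Ab+aB)/(8m)]| ≤ C·(log m)/m², where g is the Euler–Mascheroni constant. -/

import Mathlib

open Finset

open Finset

lemma aux_reflect (m : ℕ) (f : ℕ → ℝ) :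
    ∑ k ∈ Icc 1 m, f (m + 1 - k) = ∑ k ∈ Icc 1 m, f k := by
  apply Finset.sum_nbij' (fun k => m + 1 - k) (fun k => m + 1 - k)
  all_goals intro x hx <;> simp [Finset.mem_Icc] at * <;> omega

lemma aux_sq_sum (m : ℕ) : ∑ k ∈ Icc 1 m, (1:ℝ)/(k:ℝ)^2 ≤ 2 := by
  rcases Nat.eq_zero_or_pos m with rfl | hm
  · simp
  have key : ∀ n : ℕ, 1 ≤ n → ∑ k ∈ Icc 1 n, (1:ℝ)/(k:ℝ)^2 ≤ 2 - 1/(n:ℝ) := by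
    intro n hn
    induction n, hn using Nat.le_induction with
    | base => norm_num
    | succ n hn ih =>
      rw [Finset.sum_Icc_succ_top (by omega)]
      have h1 : (0:ℝ) < n := by exact_mod_cast hn
      have h2 : (1:ℝ)/((n:ℝ)+1)^2 ≤ 1/(n:ℝ) - 1/((n:ℝ)+1) := by
        rw [div_sub_div _ _ (by positivity) (by positivity)]
        rw [div_le_div_iff₀ (by positivity) (by positivity)]
        nlinarith
      push_cast
      linarith
  have h1 : (0:ℝ) < m := by exact_mod_cast hm
  have h2 := key m hm
  have h3 : (0:ℝ) < 1/(m:ℝ) := by positivity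
  linarith
open Finset

lemma aux_harmonic_real (m : ℕ) : (harmonic m : ℝ) = ∑ k ∈ Icc 1 m, (1:ℝ)/(k:ℝ) := by
  rw [harmonic_eq_sum_Icc]
  push_cast
  simp [one_div]

lemma aux_harmonic_pf (m : ℕ) (hm : 1 ≤ m) :
    ∑ k ∈ Icc 1 m, (1:ℝ)/(((m + 1 - k : ℕ) : ℝ) * (k:ℝ)) = 2 * (harmonic m : ℝ)/((m:ℝ)+1) := by
  have step : ∀ k ∈ Icc 1 m, (1:ℝ)/(((m + 1 - k : ℕ) : ℝ) * (k:ℝ))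
      = (1/((m:ℝ)+1)) * ((1:ℝ)/((m + 1 - k : ℕ):ℝ) + (1:ℝ)/(k:ℝ)) := by
    intro k hk
    simp only [Finset.mem_Icc] at hk
    have hc : ((m + 1 - k : ℕ):ℝ) = (m:ℝ) + 1 - (k:ℝ) := by
      push_cast [Nat.cast_sub (by omega : k ≤ m + 1)]
      ring
    have hk1 : (1:ℝ) ≤ (k:ℝ) := by exact_mod_cast hk.1
    have hk2 : (k:ℝ) ≤ (m:ℝ) := by exact_mod_cast hk.2
    rw [hc]
    have h1 : (m:ℝ) + 1 - (k:ℝ) > 0 := by linarith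
    field_simp
    ring
  rw [Finset.sum_congr rfl step, ← Finset.mul_sum, Finset.sum_add_distrib,
    aux_reflect m (fun k => (1:ℝ)/(k:ℝ)), aux_harmonic_real]
  ring

lemma aux_gamma (m : ℕ) (hm : 1 ≤ m) :
    |(harmonic m : ℝ) - Real.log m - Real.eulerMascheroniConstant| ≤ 1/(m:ℝ) := by
  have h1 := Real.eulerMascheroniSeq_lt_eulerMascheroniConstant m
  have h2 := Real.eulerMascheroniConstant_lt_eulerMascheroniSeq' m
  rw [Real.eulerMascheroniSeq] at h1
  rw [Real.eulerMascheroniSeq', if_neg (by omega)] at h2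
  have hm0 : (0:ℝ) < m := by exact_mod_cast hm
  have hpos : (0:ℝ) < 1/(m:ℝ) := by positivity
  have hlog : Real.log ((m:ℝ)+1) - Real.log m ≤ 1/(m:ℝ) := by
    rw [← Real.log_div (by positivity) (by positivity)]
    have := Real.log_le_sub_one_of_pos (show (0:ℝ) < ((m:ℝ)+1)/(m:ℝ) by positivity)
    have heq : ((m:ℝ)+1)/(m:ℝ) - 1 = 1/(m:ℝ) := by field_simp; ring
    linarith
  rw [abs_le]
  refine ⟨by linarith, ?_⟩
  linarith
open Finset

lemma aux_pert (p q : ℕ) (hp : 1 ≤ p) (hq : 1 ≤ q) (w : ℂ) (hw : ‖w‖ ≤ 1) :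
    ‖(1:ℂ)/((4*(p:ℂ) + w)*(4*(q:ℂ) + w)) - 1/(16*(p:ℂ)*(q:ℂ))‖
      ≤ ‖w‖ * ((p:ℝ) + (q:ℝ))/((p:ℝ)^2*(q:ℝ)^2) := by
  have hp1 : (1:ℝ) ≤ (p:ℝ) := by exact_mod_cast hp
  have hq1 : (1:ℝ) ≤ (q:ℝ) := by exact_mod_cast hq
  have hnp : 3*(p:ℝ) ≤ ‖(4*(p:ℂ) + w)‖ := by
    have h1 := norm_add_le (4*(p:ℂ) + w) (-w)
    simp only [add_neg_cancel_right, norm_neg] at h1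
    have h2 : ‖(4*(p:ℂ))‖ = 4*(p:ℝ) := by
      rw [norm_mul]; simp [Complex.norm_natCast]
    rw [h2] at h1
    linarith
  have hnq : 3*(q:ℝ) ≤ ‖(4*(q:ℂ) + w)‖ := by
    have h1 := norm_add_le (4*(q:ℂ) + w) (-w)
    simp only [add_neg_cancel_right, norm_neg] at h1
    have h2 : ‖(4*(q:ℂ))‖ = 4*(q:ℝ) := by
      rw [norm_mul]; simp [Complex.norm_natCast]
    rw [h2] at h1
    linarith
  have hD1 : (4*(p:ℂ) + w) ≠ 0 := by
    intro h; rw [h] at hnp; simp at hnp; linarith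
  have hD2 : (4*(q:ℂ) + w) ≠ 0 := by
    intro h; rw [h] at hnq; simp at hnq; linarith
  have hp0 : ((p:ℂ)) ≠ 0 := Nat.cast_ne_zero.2 (by omega)
  have hq0 : ((q:ℂ)) ≠ 0 := Nat.cast_ne_zero.2 (by omega)
  have key : (1:ℂ)/((4*(p:ℂ) + w)*(4*(q:ℂ) + w)) - 1/(16*(p:ℂ)*(q:ℂ))
      = (-(4*((p:ℂ)+(q:ℂ))*w + w^2)) / (((4*(p:ℂ) + w)*(4*(q:ℂ) + w)) * (16*(p:ℂ)*(q:ℂ))) := by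
    field_simp
    ring
  rw [key, norm_div]
  have hcast : ((p:ℂ)+(q:ℂ)) = (((p+q:ℕ)):ℂ) := by push_cast; ring
  have hnum : ‖(-(4*((p:ℂ)+(q:ℂ))*w + w^2))‖ ≤ 5*((p:ℝ)+(q:ℝ))*‖w‖ := by
    rw [norm_neg]
    calc ‖4*((p:ℂ)+(q:ℂ))*w + w^2‖ ≤ ‖4*((p:ℂ)+(q:ℂ))*w‖ + ‖w^2‖ := norm_add_le _ _
    _ = 4*((p:ℝ)+(q:ℝ))*‖w‖ + ‖w‖^2 := by
        rw [norm_mul, norm_mul, norm_pow, hcast]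
        simp only [Complex.norm_natCast, Complex.norm_ofNat]
        push_cast; ring
    _ ≤ 4*((p:ℝ)+(q:ℝ))*‖w‖ + ‖w‖ := by nlinarith [norm_nonneg w]
    _ ≤ 5*((p:ℝ)+(q:ℝ))*‖w‖ := by nlinarith [norm_nonneg w]
  have hden : 144*(p:ℝ)^2*(q:ℝ)^2 ≤ ‖(((4*(p:ℂ) + w)*(4*(q:ℂ) + w)) * (16*(p:ℂ)*(q:ℂ)))‖ := by
    rw [norm_mul, norm_mul]
    have h16 : ‖(16:ℂ)*(p:ℂ)*(q:ℂ)‖ = 16*(p:ℝ)*(q:ℝ) := by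
      rw [norm_mul, norm_mul]
      simp [Complex.norm_natCast]
    rw [h16]
    have h9 : 3*(p:ℝ)*(3*(q:ℝ)) ≤ ‖(4*(p:ℂ) + w)‖ * ‖(4*(q:ℂ) + w)‖ :=
      mul_le_mul hnp hnq (by positivity) ((by positivity : (0:ℝ) ≤ 3*(p:ℝ)).trans hnp)
    nlinarith [mul_le_mul_of_nonneg_right h9 (show (0:ℝ) ≤ 16*(p:ℝ)*(q:ℝ) by positivity)]
  have hdpos : (0:ℝ) < 144*(p:ℝ)^2*(q:ℝ)^2 := by positivity
  calc ‖(-(4*((p:ℂ)+(q:ℂ))*w + w^2))‖ / ‖(((4*(p:ℂ) + w)*(4*(q:ℂ) + w)) * (16*(p:ℂ)*(q:ℂ)))‖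
      ≤ (5*((p:ℝ)+(q:ℝ))*‖w‖) / (144*(p:ℝ)^2*(q:ℝ)^2) :=
        div_le_div₀ (by positivity) hnum hdpos hden
    _ ≤ ‖w‖ * ((p:ℝ) + (q:ℝ))/((p:ℝ)^2*(q:ℝ)^2) := by
        rw [div_le_div_iff₀ (by positivity) (by positivity)]
        nlinarith [show (0:ℝ) ≤ ((p:ℝ)+(q:ℝ))*‖w‖*((p:ℝ)^2*(q:ℝ)^2) from by positivity]
open Finset

lemma aux_shift (m : ℕ) (f : ℕ → ℝ) :
    ∑ k ∈ Icc 2 m, f (k - 1) = ∑ k ∈ Icc 1 (m-1), f k := by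
  apply Finset.sum_nbij' (fun k => k - 1) (fun k => k + 1)
  all_goals intro x hx <;> simp [Finset.mem_Icc] at * <;> omega

lemma aux_bij (m : ℕ) (f : ℕ → ℝ) :
    ∑ k ∈ Icc 2 m, f (m + 1 - k) = ∑ k ∈ Icc 1 (m-1), f k := by
  apply Finset.sum_nbij' (fun k => m + 1 - k) (fun k => m + 1 - k)
  all_goals intro x hx <;> simp [Finset.mem_Icc] at * <;> omega

set_option maxHeartbeats 4000000 in
/-- For nonzero `a, A, b, B ∈ ℂ`, `K > 0` and a sign `s ∈ {+1, -1}`, there are `C > 0`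
and `m₀` such that for all `m ≥ m₀` and `|z| ≤ K/m` the quantity
`Φ_m(z) = ∑_{k=1}^m bA/((4(m+1-k)+sz)(4k+sz)) + ∑_{k=2}^m aB/((4(k-1)+sz)(4(m+1-k)+sz))`
satisfies `|Φ_m(z) - [(Ab+aB) log m/(8m) + g (Ab+aB)/(8m)]| ≤ C (log m)/m²`, where `g`
is the Euler–Mascheroni constant. -/
theorem stmt13 (a A b B : ℂ) (ha : a ≠ 0) (hA : A ≠ 0) (hb : b ≠ 0) (hB : B ≠ 0)
    (K : ℝ) (hK : 0 < K) (s : ℝ) (hs : s = 1 ∨ s = -1) :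
    ∃ C > (0 : ℝ), ∃ m₀ : ℕ, ∀ m : ℕ, m₀ ≤ m → ∀ z : ℂ, ‖z‖ ≤ K / (m : ℝ) →
      ‖((∑ k ∈ Finset.Icc 1 m, b * A /
            ((4 * ((m : ℂ) + 1 - (k : ℂ)) + (s : ℂ) * z) * (4 * (k : ℂ) + (s : ℂ) * z))) +
          (∑ k ∈ Finset.Icc 2 m, a * B /
            ((4 * ((k : ℂ) - 1) + (s : ℂ) * z) * (4 * ((m : ℂ) + 1 - (k : ℂ)) + (s : ℂ) * z)))) -
          ((A * b + a * B) * (Real.log m : ℂ) / (8 * (m : ℂ))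
            + (Real.eulerMascheroniConstant : ℂ) * (A * b + a * B) / (8 * (m : ℂ)))‖
        ≤ C * Real.log m / (m : ℝ) ^ 2 := by
  set γ := Real.eulerMascheroniConstant with hγdef
  refine ⟨8*K*(‖b*A‖+‖a*B‖) + ‖b*A‖ + ‖a*B‖ + 1, by positivity, ⌈K⌉₊ + 3, ?_⟩
  intro m hm z hz
  -- basic numeric facts
  have hm3 : 3 ≤ m := by omega
  have hm1 : 1 ≤ m := by omega
  have hmR : (3:ℝ) ≤ (m:ℝ) := by exact_mod_cast hm3
  have hm0 : (0:ℝ) < (m:ℝ) := by linarith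
  have hKm : K ≤ (m:ℝ) := by
    calc K ≤ (⌈K⌉₊ : ℝ) := Nat.le_ceil K
    _ ≤ (m:ℝ) := by exact_mod_cast le_trans (by omega) hm
  have hlog1 : 1 ≤ Real.log m := by
    rw [show (1:ℝ) = Real.log (Real.exp 1) by simp]
    apply Real.log_le_log (Real.exp_pos 1)
    linarith [Real.exp_one_lt_d9]
  set w := (s:ℂ) * z with hw
  have hwn : ‖w‖ = ‖z‖ := by
    rw [hw, norm_mul, Complex.norm_real]
    rcases hs with rfl | rfl <;> simp
  have hwK : ‖w‖ ≤ K / (m:ℝ) := by rw [hwn]; exact hz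
  have hw1 : ‖w‖ ≤ 1 := by
    refine hwK.trans ?_
    rw [div_le_one hm0]; exact hKm
  -- recast the sums using natural-number subtraction
  set S1 := ∑ k ∈ Icc 1 m, b * A / ((4*(((m+1-k : ℕ)):ℂ) + w) * (4*((k:ℕ):ℂ) + w)) with hS1def
  set S2 := ∑ k ∈ Icc 2 m, a * B / ((4*(((k-1 : ℕ)):ℂ) + w) * (4*(((m+1-k : ℕ)):ℂ) + w)) with hS2def
  set T1 := ∑ k ∈ Icc 1 m, b * A / (16*(((m+1-k : ℕ)):ℂ)*((k:ℕ):ℂ)) with hT1def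
  set T2 := ∑ k ∈ Icc 2 m, a * B / (16*(((k-1 : ℕ)):ℂ)*(((m+1-k : ℕ)):ℂ)) with hT2def
  have hcast1 : ∀ k ∈ Icc 1 m, (((m+1-k : ℕ)):ℂ) = (m:ℂ) + 1 - (k:ℂ) := by
    intro k hk
    simp only [Finset.mem_Icc] at hk
    push_cast [Nat.cast_sub (by omega : k ≤ m + 1)]
    ring
  have heqS1 : (∑ k ∈ Finset.Icc 1 m, b * A /
      ((4 * ((m : ℂ) + 1 - (k : ℂ)) + (s : ℂ) * z) * (4 * (k : ℂ) + (s : ℂ) * z))) = S1 := by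
    apply Finset.sum_congr rfl
    intro k hk
    rw [hcast1 k hk]
  have heqS2 : (∑ k ∈ Finset.Icc 2 m, a * B /
      ((4 * ((k : ℂ) - 1) + (s : ℂ) * z) * (4 * ((m : ℂ) + 1 - (k : ℂ)) + (s : ℂ) * z))) = S2 := by
    apply Finset.sum_congr rfl
    intro k hk
    simp only [Finset.mem_Icc] at hk
    have h1 : (((k-1 : ℕ)):ℂ) = (k:ℂ) - 1 := by
      push_cast [Nat.cast_sub (by omega : 1 ≤ k)]; ring
    have h2 : (((m+1-k : ℕ)):ℂ) = (m:ℂ) + 1 - (k:ℂ) := by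
      push_cast [Nat.cast_sub (by omega : k ≤ m + 1)]; ring
    rw [h1, h2]
  -- Step A : ‖S1 - T1‖ ≤ ‖b*A‖ * (K/m) * (8/m)
  have hsum1 : ∑ k ∈ Icc 1 m, ((((m+1-k : ℕ)):ℝ) + (k:ℝ))/((((m+1-k : ℕ)):ℝ)^2*(k:ℝ)^2)
      ≤ 8/(m:ℝ) := by
    have per : ∀ k ∈ Icc 1 m, ((((m+1-k : ℕ)):ℝ) + (k:ℝ))/((((m+1-k : ℕ)):ℝ)^2*(k:ℝ)^2)
        ≤ (2/((m:ℝ)+1)) * (1/(((m+1-k : ℕ)):ℝ)^2 + 1/(k:ℝ)^2) := by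
      intro k hk
      simp only [Finset.mem_Icc] at hk
      have hP1 : (1:ℝ) ≤ (((m+1-k : ℕ)):ℝ) := by
        have : 1 ≤ m + 1 - k := by omega
        exact_mod_cast this
      have hk1 : (1:ℝ) ≤ (k:ℝ) := by exact_mod_cast hk.1
      set P : ℝ := (((m+1-k : ℕ)):ℝ) with hPdef
      have hPk : P + (k:ℝ) = (m:ℝ) + 1 := by
        rw [hPdef]
        push_cast [Nat.cast_sub (by omega : k ≤ m + 1)]
        ring
      rw [← hPk]
      have h2 : (P + (k:ℝ))^2 ≤ 2*(P^2 + (k:ℝ)^2) := by nlinarith [sq_nonneg (P - (k:ℝ))]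
      have expand : 2/(P + (k:ℝ))*(1/P^2 + 1/(k:ℝ)^2)
          = 2*(P^2 + (k:ℝ)^2)/((P + (k:ℝ))*(P^2*(k:ℝ)^2)) := by
        field_simp
        ring
      rw [expand, div_le_div_iff₀ (by positivity) (by positivity)]
      nlinarith [mul_le_mul_of_nonneg_right h2 (show (0:ℝ) ≤ P^2*(k:ℝ)^2 by positivity)]
    calc ∑ k ∈ Icc 1 m, ((((m+1-k : ℕ)):ℝ) + (k:ℝ))/((((m+1-k : ℕ)):ℝ)^2*(k:ℝ)^2)
        ≤ ∑ k ∈ Icc 1 m, (2/((m:ℝ)+1)) * (1/(((m+1-k : ℕ)):ℝ)^2 + 1/(k:ℝ)^2) :=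
          Finset.sum_le_sum per
      _ = (2/((m:ℝ)+1)) * ((∑ k ∈ Icc 1 m, 1/(((m+1-k : ℕ)):ℝ)^2)
            + ∑ k ∈ Icc 1 m, 1/(k:ℝ)^2) := by
          rw [← Finset.mul_sum, Finset.sum_add_distrib]
      _ ≤ (2/((m:ℝ)+1)) * (2 + 2) := by
          have e1 : (∑ k ∈ Icc 1 m, 1/(((m+1-k : ℕ)):ℝ)^2) = ∑ k ∈ Icc 1 m, 1/(k:ℝ)^2 :=
            aux_reflect m (fun n => 1/(n:ℝ)^2)
          rw [e1]
          have := aux_sq_sum m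
          have hpos : (0:ℝ) ≤ 2/((m:ℝ)+1) := by positivity
          nlinarith
      _ ≤ 8/(m:ℝ) := by
          rw [div_mul_eq_mul_div, div_le_div_iff₀ (by positivity) (by positivity)]
          nlinarith
  have stepA : ‖S1 - T1‖ ≤ ‖b*A‖ * (K/(m:ℝ)) * (8/(m:ℝ)) := by
    rw [hS1def, hT1def, ← Finset.sum_sub_distrib]
    calc ‖∑ k ∈ Icc 1 m, (b * A / ((4*(((m+1-k : ℕ)):ℂ) + w) * (4*((k:ℕ):ℂ) + w))
            - b * A / (16*(((m+1-k : ℕ)):ℂ)*((k:ℕ):ℂ)))‖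
        ≤ ∑ k ∈ Icc 1 m, ‖b * A / ((4*(((m+1-k : ℕ)):ℂ) + w) * (4*((k:ℕ):ℂ) + w))
            - b * A / (16*(((m+1-k : ℕ)):ℂ)*((k:ℕ):ℂ))‖ := norm_sum_le _ _
      _ ≤ ∑ k ∈ Icc 1 m, (‖b*A‖ * ‖w‖) *
            (((((m+1-k : ℕ)):ℝ) + (k:ℝ))/((((m+1-k : ℕ)):ℝ)^2*(k:ℝ)^2)) := by
          apply Finset.sum_le_sum
          intro k hk
          simp only [Finset.mem_Icc] at hk
          have hfact : b * A / ((4*(((m+1-k : ℕ)):ℂ) + w) * (4*((k:ℕ):ℂ) + w))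
              - b * A / (16*(((m+1-k : ℕ)):ℂ)*((k:ℕ):ℂ))
              = b * A * ((1:ℂ)/((4*(((m+1-k : ℕ)):ℂ) + w) * (4*((k:ℕ):ℂ) + w))
                - 1/(16*(((m+1-k : ℕ)):ℂ)*((k:ℕ):ℂ))) := by ring
          rw [hfact, norm_mul, mul_assoc ‖b*A‖ ‖w‖]
          apply mul_le_mul_of_nonneg_left ?_ (norm_nonneg (b*A))
          have := aux_pert (m+1-k) k (by omega) (by omega) w hw1
          calc ‖(1:ℂ)/((4*(((m+1-k : ℕ)):ℂ) + w) * (4*((k:ℕ):ℂ) + w))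
                - 1/(16*(((m+1-k : ℕ)):ℂ)*((k:ℕ):ℂ))‖
              ≤ ‖w‖ * ((((m+1-k : ℕ)):ℝ) + (k:ℝ))/((((m+1-k : ℕ)):ℝ)^2*(k:ℝ)^2) := this
            _ = ‖w‖ * (((((m+1-k : ℕ)):ℝ) + (k:ℝ))/((((m+1-k : ℕ)):ℝ)^2*(k:ℝ)^2)) := by
                rw [mul_div_assoc]
      _ = (‖b*A‖ * ‖w‖) * ∑ k ∈ Icc 1 m,
            (((((m+1-k : ℕ)):ℝ) + (k:ℝ))/((((m+1-k : ℕ)):ℝ)^2*(k:ℝ)^2)) := by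
          rw [← Finset.mul_sum]
      _ ≤ (‖b*A‖ * ‖w‖) * (8/(m:ℝ)) := by
          apply mul_le_mul_of_nonneg_left hsum1 (by positivity)
      _ ≤ ‖b*A‖ * (K/(m:ℝ)) * (8/(m:ℝ)) := by
          have h8 : (0:ℝ) ≤ 8/(m:ℝ) := by positivity
          have : ‖b*A‖ * ‖w‖ ≤ ‖b*A‖ * (K/(m:ℝ)) :=
            mul_le_mul_of_nonneg_left hwK (norm_nonneg _)
          exact mul_le_mul_of_nonneg_right this h8
  have hsum2 : ∑ k ∈ Icc 2 m, ((((k-1 : ℕ)):ℝ) + (((m+1-k : ℕ)):ℝ))/((((k-1 : ℕ)):ℝ)^2*(((m+1-k : ℕ)):ℝ)^2)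
      ≤ 8/(m:ℝ) := by
    have per : ∀ k ∈ Icc 2 m, ((((k-1 : ℕ)):ℝ) + (((m+1-k : ℕ)):ℝ))/((((k-1 : ℕ)):ℝ)^2*(((m+1-k : ℕ)):ℝ)^2)
        ≤ (2/(m:ℝ)) * (1/(((k-1 : ℕ)):ℝ)^2 + 1/(((m+1-k : ℕ)):ℝ)^2) := by
      intro k hk
      simp only [Finset.mem_Icc] at hk
      have hP1 : (1:ℝ) ≤ (((k-1 : ℕ)):ℝ) := by
        have : 1 ≤ k - 1 := by omega
        exact_mod_cast this
      have hQ1 : (1:ℝ) ≤ (((m+1-k : ℕ)):ℝ) := by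
        have : 1 ≤ m + 1 - k := by omega
        exact_mod_cast this
      set P : ℝ := (((k-1 : ℕ)):ℝ) with hPdef
      set Q : ℝ := (((m+1-k : ℕ)):ℝ) with hQdef
      have hPQ : P + Q = (m:ℝ) := by
        rw [hPdef, hQdef]
        push_cast [Nat.cast_sub (by omega : k ≤ m + 1), Nat.cast_sub (by omega : 1 ≤ k)]
        ring
      rw [← hPQ]
      have h2 : (P + Q)^2 ≤ 2*(P^2 + Q^2) := by nlinarith [sq_nonneg (P - Q)]
      have expand : 2/(P + Q)*(1/P^2 + 1/Q^2)
          = 2*(P^2 + Q^2)/((P + Q)*(P^2*Q^2)) := by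
        field_simp
        ring
      rw [expand, div_le_div_iff₀ (by positivity) (by positivity)]
      nlinarith [mul_le_mul_of_nonneg_right h2 (show (0:ℝ) ≤ P^2*Q^2 by positivity)]
    calc ∑ k ∈ Icc 2 m, ((((k-1 : ℕ)):ℝ) + (((m+1-k : ℕ)):ℝ))/((((k-1 : ℕ)):ℝ)^2*(((m+1-k : ℕ)):ℝ)^2)
        ≤ ∑ k ∈ Icc 2 m, (2/(m:ℝ)) * (1/(((k-1 : ℕ)):ℝ)^2 + 1/(((m+1-k : ℕ)):ℝ)^2) :=
          Finset.sum_le_sum per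
      _ = (2/(m:ℝ)) * ((∑ k ∈ Icc 2 m, 1/(((k-1 : ℕ)):ℝ)^2)
            + ∑ k ∈ Icc 2 m, 1/(((m+1-k : ℕ)):ℝ)^2) := by
          rw [← Finset.mul_sum, Finset.sum_add_distrib]
      _ ≤ (2/(m:ℝ)) * (2 + 2) := by
          have e1 : (∑ k ∈ Icc 2 m, 1/(((k-1 : ℕ)):ℝ)^2) = ∑ k ∈ Icc 1 (m-1), 1/(k:ℝ)^2 :=
            aux_shift m (fun n => 1/(n:ℝ)^2)
          have e2 : (∑ k ∈ Icc 2 m, 1/(((m+1-k : ℕ)):ℝ)^2) = ∑ k ∈ Icc 1 (m-1), 1/(k:ℝ)^2 :=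
            aux_bij m (fun n => 1/(n:ℝ)^2)
          rw [e1, e2]
          have := aux_sq_sum (m-1)
          have hpos : (0:ℝ) ≤ 2/(m:ℝ) := by positivity
          nlinarith
      _ ≤ 8/(m:ℝ) := by
          rw [div_mul_eq_mul_div, div_le_div_iff₀ (by positivity) (by positivity)]
          nlinarith
  have stepB : ‖S2 - T2‖ ≤ ‖a*B‖ * (K/(m:ℝ)) * (8/(m:ℝ)) := by
    rw [hS2def, hT2def, ← Finset.sum_sub_distrib]
    calc ‖∑ k ∈ Icc 2 m, (a * B / ((4*(((k-1 : ℕ)):ℂ) + w) * (4*(((m+1-k : ℕ)):ℂ) + w))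
            - a * B / (16*(((k-1 : ℕ)):ℂ)*(((m+1-k : ℕ)):ℂ)))‖
        ≤ ∑ k ∈ Icc 2 m, ‖a * B / ((4*(((k-1 : ℕ)):ℂ) + w) * (4*(((m+1-k : ℕ)):ℂ) + w))
            - a * B / (16*(((k-1 : ℕ)):ℂ)*(((m+1-k : ℕ)):ℂ))‖ := norm_sum_le _ _
      _ ≤ ∑ k ∈ Icc 2 m, (‖a*B‖ * ‖w‖) *
            (((((k-1 : ℕ)):ℝ) + (((m+1-k : ℕ)):ℝ))/((((k-1 : ℕ)):ℝ)^2*(((m+1-k : ℕ)):ℝ)^2)) := by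
          apply Finset.sum_le_sum
          intro k hk
          simp only [Finset.mem_Icc] at hk
          have hfact : a * B / ((4*(((k-1 : ℕ)):ℂ) + w) * (4*(((m+1-k : ℕ)):ℂ) + w))
              - a * B / (16*(((k-1 : ℕ)):ℂ)*(((m+1-k : ℕ)):ℂ))
              = a * B * ((1:ℂ)/((4*(((k-1 : ℕ)):ℂ) + w) * (4*(((m+1-k : ℕ)):ℂ) + w))
                - 1/(16*(((k-1 : ℕ)):ℂ)*(((m+1-k : ℕ)):ℂ))) := by ring
          rw [hfact, norm_mul, mul_assoc ‖a*B‖ ‖w‖]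
          apply mul_le_mul_of_nonneg_left ?_ (norm_nonneg (a*B))
          have := aux_pert (k-1) (m+1-k) (by omega) (by omega) w hw1
          calc ‖(1:ℂ)/((4*(((k-1 : ℕ)):ℂ) + w) * (4*(((m+1-k : ℕ)):ℂ) + w))
                - 1/(16*(((k-1 : ℕ)):ℂ)*(((m+1-k : ℕ)):ℂ))‖
              ≤ ‖w‖ * ((((k-1 : ℕ)):ℝ) + (((m+1-k : ℕ)):ℝ))/((((k-1 : ℕ)):ℝ)^2*(((m+1-k : ℕ)):ℝ)^2) := this
            _ = ‖w‖ * (((((k-1 : ℕ)):ℝ) + (((m+1-k : ℕ)):ℝ))/((((k-1 : ℕ)):ℝ)^2*(((m+1-k : ℕ)):ℝ)^2)) := by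
                rw [mul_div_assoc]
      _ = (‖a*B‖ * ‖w‖) * ∑ k ∈ Icc 2 m,
            (((((k-1 : ℕ)):ℝ) + (((m+1-k : ℕ)):ℝ))/((((k-1 : ℕ)):ℝ)^2*(((m+1-k : ℕ)):ℝ)^2)) := by
          rw [← Finset.mul_sum]
      _ ≤ (‖a*B‖ * ‖w‖) * (8/(m:ℝ)) := by
          apply mul_le_mul_of_nonneg_left hsum2 (by positivity)
      _ ≤ ‖a*B‖ * (K/(m:ℝ)) * (8/(m:ℝ)) := by
          have h8 : (0:ℝ) ≤ 8/(m:ℝ) := by positivity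
          have : ‖a*B‖ * ‖w‖ ≤ ‖a*B‖ * (K/(m:ℝ)) :=
            mul_le_mul_of_nonneg_left hwK (norm_nonneg _)
          exact mul_le_mul_of_nonneg_right this h8
  -- Step C : main term
  have hγ1 : γ < 1 := by
    rw [hγdef]
    exact Real.eulerMascheroniConstant_lt_two_thirds.trans (by norm_num)
  have hγ0 : 0 < γ := by
    rw [hγdef]
    exact lt_trans (by norm_num) Real.one_half_lt_eulerMascheroniConstant
  have hmC : (m:ℂ) ≠ 0 := Nat.cast_ne_zero.2 (by omega)
  have hmC1 : (m:ℂ) + 1 ≠ 0 := by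
    have : ((m+1 : ℕ):ℂ) ≠ 0 := Nat.cast_ne_zero.2 (by omega)
    push_cast at this
    exact this
  have hT1val : T1 = (b*A/16) * ((2 * (harmonic m : ℝ)/((m:ℝ)+1) : ℝ) : ℂ) := by
    rw [hT1def, ← aux_harmonic_pf m hm1]
    push_cast
    rw [Finset.mul_sum]
    apply Finset.sum_congr rfl
    intro k hk
    push_cast
    ring
  have hT2real : ∑ k ∈ Icc 2 m, (1:ℝ)/((((k-1 : ℕ)):ℝ) * (((m+1-k : ℕ)):ℝ))
      = 2 * (harmonic (m-1) : ℝ)/((m:ℝ)) := by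
    have e1 : ∑ k ∈ Icc 2 m, (1:ℝ)/((((k-1 : ℕ)):ℝ) * (((m+1-k : ℕ)):ℝ))
        = ∑ k ∈ Icc 2 m, (fun j => (1:ℝ)/(((((m-1) + 1 - j : ℕ)):ℝ) * ((j:ℕ):ℝ))) (k-1) := by
      apply Finset.sum_congr rfl
      intro k hk
      simp only [Finset.mem_Icc] at hk
      have h : (m-1) + 1 - (k-1) = m + 1 - k := by omega
      beta_reduce
      rw [h]
      ring
    rw [e1, aux_shift m (fun j => (1:ℝ)/(((((m-1) + 1 - j : ℕ)):ℝ) * ((j:ℕ):ℝ))), aux_harmonic_pf (m-1) (by omega)]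
    have : (((m-1 : ℕ)):ℝ) + 1 = (m:ℝ) := by
      push_cast [Nat.cast_sub (by omega : 1 ≤ m)]
      ring
    rw [this]
  have hT2val : T2 = (a*B/16) * ((2 * (harmonic (m-1) : ℝ)/(m:ℝ) : ℝ) : ℂ) := by
    rw [hT2def, ← hT2real]
    push_cast
    rw [Finset.mul_sum]
    apply Finset.sum_congr rfl
    intro k hk
    push_cast
    ring
  set X1 : ℝ := (harmonic m : ℝ)/((m:ℝ)+1) - (Real.log m + γ)/(m:ℝ) with hX1def
  set X2 : ℝ := ((harmonic (m-1) : ℝ) - (Real.log m + γ))/(m:ℝ) with hX2def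
  have hgm := aux_gamma m hm1
  rw [← hγdef] at hgm
  have hHm1 : (harmonic m : ℝ) = (harmonic (m-1) : ℝ) + 1/(m:ℝ) := by
    have e := harmonic_succ (m-1)
    rw [show (m-1) + 1 = m by omega] at e
    rw [e]
    push_cast
    ring
  have hL0 : 0 ≤ Real.log m + γ := by linarith
  have hX1bd : |X1| ≤ 3 * Real.log m / (m:ℝ)^2 := by
    have e : X1 = ((m:ℝ)*((harmonic m : ℝ) - (Real.log m + γ)) - (Real.log m + γ))
        /((m:ℝ)*((m:ℝ)+1)) := by
      rw [hX1def]
      field_simp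
      ring
    rw [e, abs_div, abs_of_pos (by positivity : (0:ℝ) < (m:ℝ)*((m:ℝ)+1))]
    have hnum : |(m:ℝ)*((harmonic m : ℝ) - (Real.log m + γ)) - (Real.log m + γ)|
        ≤ 1 + (Real.log m + γ) := by
      calc |(m:ℝ)*((harmonic m : ℝ) - (Real.log m + γ)) - (Real.log m + γ)|
          ≤ |(m:ℝ)*((harmonic m : ℝ) - (Real.log m + γ))| + |Real.log m + γ| := abs_sub _ _
        _ ≤ 1 + (Real.log m + γ) := by
            rw [abs_mul, abs_of_pos hm0, abs_of_nonneg hL0]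
            have h1 : |(harmonic m : ℝ) - (Real.log m + γ)| ≤ 1/(m:ℝ) := by
              have : (harmonic m : ℝ) - (Real.log m + γ)
                  = (harmonic m : ℝ) - Real.log m - γ := by ring
              rw [this]; exact hgm
            have := mul_le_mul_of_nonneg_left h1 hm0.le
            rw [mul_one_div, div_self hm0.ne'] at this
            linarith
    calc |(m:ℝ)*((harmonic m : ℝ) - (Real.log m + γ)) - (Real.log m + γ)| / ((m:ℝ)*((m:ℝ)+1))
        ≤ (1 + (Real.log m + γ)) / ((m:ℝ)*((m:ℝ)+1)) := by
          gcongr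
      _ ≤ 3 * Real.log m / (m:ℝ)^2 := by
          rw [div_le_div_iff₀ (by positivity) (by positivity)]
          nlinarith [mul_pos hm0 hm0, hlog1, hγ1, sq_nonneg (m:ℝ)]
  have hX2bd : |X2| ≤ 2 / (m:ℝ)^2 := by
    have e : X2 = (((harmonic m : ℝ) - Real.log m - γ) - 1/(m:ℝ))/(m:ℝ) := by
      rw [hX2def, hHm1]
      ring
    rw [e, abs_div, abs_of_pos hm0]
    have hnum : |((harmonic m : ℝ) - Real.log m - γ) - 1/(m:ℝ)| ≤ 2/(m:ℝ) := by
      calc |((harmonic m : ℝ) - Real.log m - γ) - 1/(m:ℝ)|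
          ≤ |(harmonic m : ℝ) - Real.log m - γ| + |1/(m:ℝ)| := abs_sub _ _
        _ ≤ 1/(m:ℝ) + 1/(m:ℝ) := by
            rw [abs_of_pos (by positivity : (0:ℝ) < 1/(m:ℝ))]
            linarith
        _ = 2/(m:ℝ) := by ring
    calc |((harmonic m : ℝ) - Real.log m - γ) - 1/(m:ℝ)|/(m:ℝ)
        ≤ (2/(m:ℝ))/(m:ℝ) := by gcongr
      _ = 2/(m:ℝ)^2 := by
          field_simp
  have stepC : ‖T1 + T2 - ((A * b + a * B) * (Real.log m : ℂ) / (8 * (m : ℂ))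
      + (γ : ℂ) * (A * b + a * B) / (8 * (m : ℂ)))‖
      ≤ (‖b*A‖ + ‖a*B‖) * Real.log m / (m:ℝ)^2 := by
    have key : T1 + T2 - ((A * b + a * B) * (Real.log m : ℂ) / (8 * (m : ℂ))
        + (γ : ℂ) * (A * b + a * B) / (8 * (m : ℂ)))
        = (b*A/8) * (X1:ℂ) + (a*B/8) * (X2:ℂ) := by
      rw [hT1val, hT2val, hX1def, hX2def]
      push_cast
      field_simp
      ring
    rw [key]
    calc ‖(b*A/8) * (X1:ℂ) + (a*B/8) * (X2:ℂ)‖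
        ≤ ‖(b*A/8) * (X1:ℂ)‖ + ‖(a*B/8) * (X2:ℂ)‖ := norm_add_le _ _
      _ = ‖b*A‖/8 * |X1| + ‖a*B‖/8 * |X2| := by
          rw [norm_mul, norm_mul, norm_div, norm_div, Complex.norm_real, Complex.norm_real]
          norm_num
      _ ≤ ‖b*A‖/8 * (3 * Real.log m / (m:ℝ)^2) + ‖a*B‖/8 * (2 / (m:ℝ)^2) := by
          gcongr
      _ ≤ (‖b*A‖ + ‖a*B‖) * Real.log m / (m:ℝ)^2 := by
          have hA' : ‖b*A‖/8*(3*Real.log m/(m:ℝ)^2) ≤ ‖b*A‖ * Real.log m/(m:ℝ)^2 := by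
            rw [show ‖b*A‖/8*(3*Real.log m/(m:ℝ)^2)
              = (3/8)*(‖b*A‖ * Real.log m/(m:ℝ)^2) by ring]
            nlinarith [show (0:ℝ) ≤ ‖b*A‖*Real.log m/(m:ℝ)^2 by positivity]
          have hB' : ‖a*B‖/8*(2/(m:ℝ)^2) ≤ ‖a*B‖ * Real.log m/(m:ℝ)^2 := by
            have h1 : ‖a*B‖/(m:ℝ)^2 ≤ ‖a*B‖*Real.log m/(m:ℝ)^2 := by
              rw [div_le_div_iff₀ (by positivity) (by positivity)]
              nlinarith [mul_le_mul_of_nonneg_left hlog1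
                (show (0:ℝ) ≤ ‖a*B‖*(m:ℝ)^2 by positivity)]
            have h0 : (0:ℝ) ≤ ‖a*B‖/(m:ℝ)^2 := by positivity
            rw [show ‖a*B‖/8*(2/(m:ℝ)^2) = (1/4)*(‖a*B‖/(m:ℝ)^2) by ring]
            linarith
          have e : ‖b*A‖ * Real.log m/(m:ℝ)^2 + ‖a*B‖ * Real.log m/(m:ℝ)^2
              = (‖b*A‖+‖a*B‖)*Real.log m/(m:ℝ)^2 := by ring
          linarith
  -- assemble
  have tri : ‖((∑ k ∈ Finset.Icc 1 m, b * A /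
            ((4 * ((m : ℂ) + 1 - (k : ℂ)) + (s : ℂ) * z) * (4 * (k : ℂ) + (s : ℂ) * z))) +
          (∑ k ∈ Finset.Icc 2 m, a * B /
            ((4 * ((k : ℂ) - 1) + (s : ℂ) * z) * (4 * ((m : ℂ) + 1 - (k : ℂ)) + (s : ℂ) * z)))) -
          ((A * b + a * B) * (Real.log m : ℂ) / (8 * (m : ℂ))
            + (γ : ℂ) * (A * b + a * B) / (8 * (m : ℂ)))‖
      ≤ ‖S1 - T1‖ + ‖S2 - T2‖ + ‖T1 + T2 - ((A * b + a * B) * (Real.log m : ℂ) / (8 * (m : ℂ))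
            + (γ : ℂ) * (A * b + a * B) / (8 * (m : ℂ)))‖ := by
    rw [heqS1, heqS2]
    have : S1 + S2 - ((A * b + a * B) * (Real.log m : ℂ) / (8 * (m : ℂ))
            + (γ : ℂ) * (A * b + a * B) / (8 * (m : ℂ)))
        = (S1 - T1) + (S2 - T2) + (T1 + T2 - ((A * b + a * B) * (Real.log m : ℂ) / (8 * (m : ℂ))
            + (γ : ℂ) * (A * b + a * B) / (8 * (m : ℂ)))) := by ring
    rw [this]
    exact (norm_add_le _ _).trans (by gcongr; exact norm_add_le _ _)
  refine tri.trans ?_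
  have hKm2 : ‖b*A‖ * (K/(m:ℝ)) * (8/(m:ℝ)) ≤ 8*K*‖b*A‖ * Real.log m / (m:ℝ)^2 := by
    have heq : ‖b*A‖ * (K/(m:ℝ)) * (8/(m:ℝ)) = 8*K*‖b*A‖ / (m:ℝ)^2 := by
      field_simp
    rw [heq, div_le_div_iff₀ (by positivity) (by positivity)]
    nlinarith [mul_le_mul_of_nonneg_left hlog1 (show (0:ℝ) ≤ 8*K*‖b*A‖*((m:ℝ)^2) by positivity)]
  have hKm3 : ‖a*B‖ * (K/(m:ℝ)) * (8/(m:ℝ)) ≤ 8*K*‖a*B‖ * Real.log m / (m:ℝ)^2 := by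
    have heq : ‖a*B‖ * (K/(m:ℝ)) * (8/(m:ℝ)) = 8*K*‖a*B‖ / (m:ℝ)^2 := by
      field_simp
    rw [heq, div_le_div_iff₀ (by positivity) (by positivity)]
    nlinarith [mul_le_mul_of_nonneg_left hlog1 (show (0:ℝ) ≤ 8*K*‖a*B‖*((m:ℝ)^2) by positivity)]
  calc ‖S1 - T1‖ + ‖S2 - T2‖ + _ ≤ (8*K*‖b*A‖ * Real.log m / (m:ℝ)^2)
        + (8*K*‖a*B‖ * Real.log m / (m:ℝ)^2)
        + ((‖b*A‖ + ‖a*B‖) * Real.log m / (m:ℝ)^2) := by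
        gcongr
        · exact stepA.trans hKm2
        · exact stepB.trans hKm3
    _ ≤ (8*K*(‖b*A‖+‖a*B‖) + ‖b*A‖ + ‖a*B‖ + 1) * Real.log m / (m:ℝ)^2 := by
        rw [← add_div, ← add_div, div_le_div_iff₀ (by positivity) (by positivity)]
        ring_nf
        nlinarith [mul_pos (mul_pos hm0 hm0) (lt_of_lt_of_le one_pos hlog1),
          sq_nonneg (m:ℝ), hlog1]
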